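/- arXiv:2408.08240 — 2 statements merged into one kernel-verified Lean document; each statement's English description precedes it below -/
import Mathlib

section
/- Let H ∈ (0, 1], ε > 0, and let B be a fractional Brownian motion with Hurst parameter H. Define X(t) := ε·(B(t) − e^{−t} ∫_0^t e^u B(u) du). Then for every t ≥ 0, E[ X(t)² ] = ε²·( t^{2H} e^{−t} + (1/2)·∫_0^t u^{2H} ( e^{−u} − e^{u − 2t} ) du ). -/
open MeasureTheory ProbabilityTheory Real

section helpers
open intervalIntegral in

lemma memLp_two_of_map_gaussian {Ω : Type*} [MeasurableSpace Ω] {P : Measure Ω}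
    {f : Ω → ℝ} (hf : Measurable f) {v : NNReal}
    (h : Measure.map f P = gaussianReal 0 v) : MemLp f 2 P := by
  have hid : MemLp (id : ℝ → ℝ) 2 (gaussianReal 0 v) := by
    rw [memLp_two_iff_integrable_sq aestronglyMeasurable_id]
    by_cases hv : v = 0
    · subst hv
      rw [gaussianReal_zero_var]
      refine ⟨(measurable_id.pow_const 2).aestronglyMeasurable, ?_⟩
      simp [HasFiniteIntegral, lintegral_dirac]
    · rw [gaussianReal_of_var_ne_zero _ hv,
        integrable_withDensity_iff (measurable_gaussianPDF _ _)
          (ae_of_all _ fun x => ENNReal.ofReal_lt_top)]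
    
      have hv' : (0:ℝ) < 1 / (2 * (v:ℝ)) := by positivity
      have h1 : Integrable (fun x : ℝ => x ^ (2:ℝ) * Real.exp (-(1/(2*(v:ℝ))) * x ^ 2)) :=
        integrable_rpow_mul_exp_neg_mul_sq hv' (by norm_num)
      have h2 := h1.const_mul ((Real.sqrt (2 * π * v))⁻¹)
      simp only [Real.rpow_two] at h2
      refine h2.congr (ae_of_all _ fun x => ?_)
      simp only [gaussianPDF, gaussianPDFReal, id_eq]
      rw [ENNReal.toReal_ofReal (by positivity)]
      rw [show -(1/(2*(v:ℝ))) * x ^ 2 = -(x - 0) ^ 2 / (2 * (v:ℝ)) by ring]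
      ring
  have := (memLp_map_measure_iff aestronglyMeasurable_id hf.aemeasurable).mp (h ▸ hid)
  exact this

lemma memLp_two_integrable_mul {Ω : Type*} [MeasurableSpace Ω] {P : Measure Ω} {f g : Ω → ℝ}
    (hf : MemLp f 2 P) (hg : MemLp g 2 P) : Integrable (fun ω => f ω * g ω) P := by
  have h1 : Integrable (fun ω => f ω ^ 2 + g ω ^ 2) P := hf.integrable_sq.add hg.integrable_sq
  refine h1.mono' (hf.1.mul hg.1) (ae_of_all _ fun ω => ?_)
  simp only [norm_mul, Real.norm_eq_abs]
  nlinarith [abs_nonneg (f ω), abs_nonneg (g ω), sq_abs (f ω), sq_abs (g ω),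
    sq_nonneg (|f ω| - |g ω|)]


lemma integral_exp_mul_comp_sub (φ : ℝ → ℝ) (c a : ℝ) :
    ∫ u in (0:ℝ)..a, Real.exp (c * u) * φ (a - u)
      = Real.exp (c * a) * ∫ w in (0:ℝ)..a, Real.exp (-(c * w)) * φ w := by
  have h1 : ∀ u, Real.exp (c * u) * φ (a - u)
      = (fun w => Real.exp (c * a) * (Real.exp (-(c * w)) * φ w)) (a - u) := by
    intro u
    simp only [← mul_assoc, ← Real.exp_add]
    ring_nf
  rw [intervalIntegral.integral_congr (fun u _ => h1 u)]
  rw [intervalIntegral.integral_comp_sub_left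
    (fun w => Real.exp (c * a) * (Real.exp (-(c * w)) * φ w)) a]
  simp [intervalIntegral.integral_const_mul]

lemma integral_exp_mul_comp_sub_right (φ : ℝ → ℝ) (u b : ℝ) :
    ∫ v in u..b, Real.exp v * φ (v - u)
      = Real.exp u * ∫ w in (0:ℝ)..(b - u), Real.exp w * φ w := by
  have h1 : ∀ v, Real.exp v * φ (v - u)
      = (fun w => Real.exp u * (Real.exp w * φ w)) (v - u) := by
    intro v
    simp only [← mul_assoc, ← Real.exp_add]
    ring_nf
  rw [intervalIntegral.integral_congr (fun v _ => h1 v)]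
  rw [intervalIntegral.integral_comp_sub_right (fun w => Real.exp u * (Real.exp w * φ w)) u]
  simp [intervalIntegral.integral_const_mul]

lemma integral_exp_mul_primitive (ψ : ℝ → ℝ) (hψ : Continuous ψ) (c a : ℝ) :
    ∫ u in (0:ℝ)..a, c * Real.exp (c * u) * ∫ w in (0:ℝ)..u, Real.exp (-(c * w)) * ψ w
      = Real.exp (c * a) * (∫ w in (0:ℝ)..a, Real.exp (-(c * w)) * ψ w)
        - ∫ u in (0:ℝ)..a, ψ u := by
  set g : ℝ → ℝ := fun w => Real.exp (-(c * w)) * ψ w with hg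
  have hgc : Continuous g := by continuity
  set J : ℝ → ℝ := fun u => ∫ w in (0:ℝ)..u, g w with hJ
  have hJd : ∀ u, HasDerivAt J (g u) u := fun u =>
    intervalIntegral.integral_hasDerivAt_right (hgc.intervalIntegrable 0 u)
      (hgc.stronglyMeasurable.stronglyMeasurableAtFilter) hgc.continuousAt
  have hJc : Continuous J := continuous_iff_continuousAt.2 fun u => (hJd u).continuousAt
  have hF : ∀ u, HasDerivAt (fun u => Real.exp (c * u) * J u)
      (c * Real.exp (c * u) * J u + ψ u) u := by
    intro u
    have h1 : HasDerivAt (fun u => Real.exp (c * u)) (c * Real.exp (c * u)) u := by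
      have h0 := ((hasDerivAt_id' u).const_mul c).exp
      convert h0 using 1
      ring
    have := h1.mul (hJd u)
    refine this.congr_deriv ?_
    simp only [hg, ← mul_assoc, ← Real.exp_add]
    ring_nf
    simp
  have hc1 : Continuous fun u : ℝ => c * Real.exp (c * u) * J u := by
    apply Continuous.mul _ hJc
    exact continuous_const.mul (Real.continuous_exp.comp (continuous_const.mul continuous_id))
  have key := intervalIntegral.integral_eq_sub_of_hasDerivAt (fun u (_ : u ∈ Set.uIcc 0 a) => hF u)
    ((hc1.add hψ).intervalIntegrable 0 a)
  have hJ0 : J 0 = 0 := intervalIntegral.integral_same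
  rw [intervalIntegral.integral_add (hc1.intervalIntegrable 0 a) (hψ.intervalIntegrable 0 a)] at key
  have : ∫ u in (0:ℝ)..a, c * Real.exp (c * u) * J u
      = Real.exp (c * a) * J a - ∫ u in (0:ℝ)..a, ψ u := by
    rw [eq_sub_iff_add_eq]
    rw [key, hJ0]
    simp
  exact this

lemma fOU_main_calc (f : ℝ → ℝ) (hf : Continuous f) (t : ℝ) (ht : 0 ≤ t) :
    f t - 2 * Real.exp (-t) * (∫ u in (0:ℝ)..t, Real.exp u * ((1/2) * (f t + f u - f (t - u))))
      + Real.exp (-(2*t)) * (∫ u in (0:ℝ)..t, Real.exp u *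
          ∫ v in (0:ℝ)..t, Real.exp v * ((1/2) * (f u + f v - f |u - v|)))
    = f t * Real.exp (-t)
      + (1/2) * ∫ u in (0:ℝ)..t, f u * (Real.exp (-u) - Real.exp (u - 2*t)) := by
  have hII : ∀ (g : ℝ → ℝ), Continuous g → ∀ a b : ℝ, IntervalIntegrable g volume a b :=
    fun g hg a b => hg.intervalIntegrable a b
  have hce : Continuous fun u : ℝ => Real.exp u * f u := Real.continuous_exp.mul hf
  have hcen : Continuous fun u : ℝ => Real.exp (-u) * f u :=
    (Real.continuous_exp.comp continuous_neg).mul hf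
  set I : ℝ := ∫ u in (0:ℝ)..t, Real.exp u * f u with hI
  set Jn : ℝ := ∫ u in (0:ℝ)..t, Real.exp (-u) * f u with hJn
  -- the primitives
  set K : ℝ → ℝ := fun s => ∫ w in (0:ℝ)..s, Real.exp w * f w with hK
  set L : ℝ → ℝ := fun s => ∫ w in (0:ℝ)..s, Real.exp (-w) * f w with hL
  have hKd : ∀ s, HasDerivAt K (Real.exp s * f s) s := fun s =>
    intervalIntegral.integral_hasDerivAt_right (hce.intervalIntegrable 0 s)
      hce.stronglyMeasurable.stronglyMeasurableAtFilter hce.continuousAt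
  have hLd : ∀ s, HasDerivAt L (Real.exp (-s) * f s) s := fun s =>
    intervalIntegral.integral_hasDerivAt_right (hcen.intervalIntegrable 0 s)
      hcen.stronglyMeasurable.stronglyMeasurableAtFilter hcen.continuousAt
  have hKc : Continuous K := continuous_iff_continuousAt.2 fun s => (hKd s).continuousAt
  have hLc : Continuous L := continuous_iff_continuousAt.2 fun s => (hLd s).continuousAt
  -- ∫ exp = exp t - 1
  have hexpint : (∫ v in (0:ℝ)..t, Real.exp v) = Real.exp t - 1 := by
    rw [integral_exp]; simp
  ----------------------------------------------------------------
  -- T1 : the single integral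
  have hT1sub : (∫ u in (0:ℝ)..t, Real.exp u * f (t - u)) = Real.exp t * Jn := by
    have := integral_exp_mul_comp_sub f 1 t
    simp only [one_mul] at this
    rw [this, hJn]
  have hT1 : (∫ u in (0:ℝ)..t, Real.exp u * ((1/2) * (f t + f u - f (t - u))))
      = (1/2) * (f t * (Real.exp t - 1) + I - Real.exp t * Jn) := by
    have hcongr : ∀ u ∈ Set.uIcc (0:ℝ) t, Real.exp u * ((1/2) * (f t + f u - f (t - u)))
        = (1/2) * (f t * Real.exp u + Real.exp u * f u - Real.exp u * f (t - u)) := by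
      intro u _; ring
    rw [intervalIntegral.integral_congr hcongr]
    rw [intervalIntegral.integral_const_mul]
    rw [intervalIntegral.integral_sub
      ((hII (fun u => f t * Real.exp u) (continuous_const.mul Real.continuous_exp) 0 t).add
        (hII _ hce 0 t))
      (hII (fun u => Real.exp u * f (t - u)) (by continuity) 0 t)]
    rw [intervalIntegral.integral_add
      (hII (fun u => f t * Real.exp u) (continuous_const.mul Real.continuous_exp) 0 t)
      (hII _ hce 0 t)]
    rw [intervalIntegral.integral_const_mul, hexpint, hT1sub, ← hI]
  ----------------------------------------------------------------
  -- inner integral over v, for u ∈ [0,t]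
  have hinner : ∀ u, 0 ≤ u → u ≤ t →
      (∫ v in (0:ℝ)..t, Real.exp v * ((1/2) * (f u + f v - f |u - v|)))
      = (1/2) * (f u * (Real.exp t - 1) + I
          - (Real.exp u * L u + Real.exp u * K (t - u))) := by
    intro u hu0 hut
    have habs_cont : Continuous fun v : ℝ => Real.exp v * f |u - v| :=
      Real.continuous_exp.mul (hf.comp ((continuous_const.sub continuous_id).abs))
    have habs : (∫ v in (0:ℝ)..t, Real.exp v * f |u - v|)
        = Real.exp u * L u + Real.exp u * K (t - u) := by
      have hsplit := intervalIntegral.integral_add_adjacent_intervals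
        (hII (fun v => Real.exp v * f |u - v|) habs_cont 0 u)
        (hII (fun v => Real.exp v * f |u - v|) habs_cont u t)
      rw [← hsplit]
      congr 1
      · have h1 : ∀ v ∈ Set.uIcc (0:ℝ) u, Real.exp v * f |u - v| = Real.exp v * f (u - v) := by
          intro v hv
          rw [Set.uIcc_of_le hu0] at hv
          rw [abs_of_nonneg (by linarith [hv.2])]
        rw [intervalIntegral.integral_congr h1]
        have h2 := integral_exp_mul_comp_sub f 1 u
        simp only [one_mul] at h2
        rw [h2]
      · have h2 : ∀ v ∈ Set.uIcc u t, Real.exp v * f |u - v| = Real.exp v * f (v - u) := by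
          intro v hv
          rw [Set.uIcc_of_le hut] at hv
          rw [abs_sub_comm, abs_of_nonneg (by linarith [hv.1])]
        rw [intervalIntegral.integral_congr h2]
        exact integral_exp_mul_comp_sub_right f u t
    have hcongr : ∀ v ∈ Set.uIcc (0:ℝ) t, Real.exp v * ((1/2) * (f u + f v - f |u - v|))
        = (1/2) * (f u * Real.exp v + Real.exp v * f v - Real.exp v * f |u - v|) := by
      intro v _; ring
    rw [intervalIntegral.integral_congr hcongr, intervalIntegral.integral_const_mul]
    rw [intervalIntegral.integral_sub
      ((hII (fun v => f u * Real.exp v) (continuous_const.mul Real.continuous_exp) 0 t).add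
        (hII _ hce 0 t))
      (hII (fun v => Real.exp v * f |u - v|) habs_cont 0 t)]
    rw [intervalIntegral.integral_add
      (hII (fun v => f u * Real.exp v) (continuous_const.mul Real.continuous_exp) 0 t)
      (hII _ hce 0 t)]
    rw [intervalIntegral.integral_const_mul, hexpint, habs, ← hI]
  ----------------------------------------------------------------
  -- the two integration-by-parts identities
  have hexp2 : ∀ u : ℝ, Real.exp u * Real.exp u = Real.exp (2*u) := by
    intro u; rw [two_mul, Real.exp_add]
  have hA1 : (∫ u in (0:ℝ)..t, Real.exp (2*u) * L u) = (1/2) * (Real.exp (2*t) * Jn - I) := by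
    have hparts := integral_exp_mul_primitive (fun w => Real.exp w * f w) hce 2 t
    have hcongL : ∀ a : ℝ, (∫ w in (0:ℝ)..a, Real.exp (-(2*w)) * (Real.exp w * f w)) = L a := by
      intro a
      apply intervalIntegral.integral_congr
      intro w _
      simp only [← mul_assoc, ← Real.exp_add]
      ring_nf
    simp only [hcongL] at hparts
    simp only [mul_assoc] at hparts
    rw [intervalIntegral.integral_const_mul] at hparts
    have hLt : L t = Jn := rfl
    have hIt : (∫ u in (0:ℝ)..t, Real.exp u * f u) = I := rfl
    rw [hLt, hIt] at hparts
    linarith [hparts]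
  have hA2 : (∫ u in (0:ℝ)..t, Real.exp (2*u) * K (t - u)) = (1/2) * (Real.exp (2*t) * Jn - I) := by
    rw [integral_exp_mul_comp_sub K 2 t]
    have hparts := integral_exp_mul_primitive (fun w => Real.exp (-w) * f w) hcen (-2) t
    have hcongK : ∀ a : ℝ, (∫ w in (0:ℝ)..a, Real.exp (-(-2*w)) * (Real.exp (-w) * f w)) = K a := by
      intro a
      apply intervalIntegral.integral_congr
      intro w _
      simp only [← mul_assoc, ← Real.exp_add]
      ring_nf
    simp only [hcongK] at hparts
    simp only [neg_mul, intervalIntegral.integral_neg] at hparts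
    simp only [mul_assoc] at hparts
    rw [intervalIntegral.integral_const_mul] at hparts
    have hKt : K t = I := rfl
    have hJt : (∫ u in (0:ℝ)..t, Real.exp (-u) * f u) = Jn := rfl
    rw [hKt, hJt] at hparts
    have h2t : Real.exp (2*t) * Real.exp (-(2*t)) = 1 := by
      rw [← Real.exp_add]; simp
    have hval : (∫ w in (0:ℝ)..t, Real.exp (-(2*w)) * K w)
        = (1/2) * (Jn - Real.exp (-(2*t)) * I) := by linarith [hparts]
    rw [hval]
    linear_combination (-(1/2) * I) * h2t
  ----------------------------------------------------------------
  -- the double integral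
  have hT2 : (∫ u in (0:ℝ)..t, Real.exp u *
        ∫ v in (0:ℝ)..t, Real.exp v * ((1/2) * (f u + f v - f |u - v|)))
      = (1/2) * ((Real.exp t - 1) * I + I * (Real.exp t - 1)
          - (1/2) * (Real.exp (2*t) * Jn - I) - (1/2) * (Real.exp (2*t) * Jn - I)) := by
    have hcongr : ∀ u ∈ Set.uIcc (0:ℝ) t, (Real.exp u *
          ∫ v in (0:ℝ)..t, Real.exp v * ((1/2) * (f u + f v - f |u - v|)))
        = (1/2) * ((Real.exp t - 1) * (Real.exp u * f u) + I * Real.exp u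
            - Real.exp (2*u) * L u - Real.exp (2*u) * K (t - u)) := by
      intro u hu
      rw [Set.uIcc_of_le ht] at hu
      rw [hinner u hu.1 hu.2, ← hexp2 u]
      ring
    rw [intervalIntegral.integral_congr hcongr, intervalIntegral.integral_const_mul]
    have c1 : Continuous fun u : ℝ => (Real.exp t - 1) * (Real.exp u * f u) :=
      continuous_const.mul hce
    have c2 : Continuous fun u : ℝ => I * Real.exp u := continuous_const.mul Real.continuous_exp
    have cexp2 : Continuous fun u : ℝ => Real.exp (2*u) :=
      Real.continuous_exp.comp (continuous_const.mul continuous_id)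
    have c3 : Continuous fun u : ℝ => Real.exp (2*u) * L u := cexp2.mul hLc
    have c4 : Continuous fun u : ℝ => Real.exp (2*u) * K (t - u) :=
      cexp2.mul (hKc.comp (continuous_const.sub continuous_id))
    rw [intervalIntegral.integral_sub (((hII _ c1 0 t).add (hII _ c2 0 t)).sub (hII _ c3 0 t))
      (hII _ c4 0 t)]
    rw [intervalIntegral.integral_sub ((hII _ c1 0 t).add (hII _ c2 0 t)) (hII _ c3 0 t)]
    rw [intervalIntegral.integral_add (hII _ c1 0 t) (hII _ c2 0 t)]
    rw [intervalIntegral.integral_const_mul, intervalIntegral.integral_const_mul, ← hI,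
      hexpint, hA1, hA2]
  ----------------------------------------------------------------
  -- the target integral
  have hgoalint : (∫ u in (0:ℝ)..t, f u * (Real.exp (-u) - Real.exp (u - 2*t)))
      = Jn - Real.exp (-(2*t)) * I := by
    have hcongr : ∀ u ∈ Set.uIcc (0:ℝ) t, f u * (Real.exp (-u) - Real.exp (u - 2*t))
        = Real.exp (-u) * f u - Real.exp (-(2*t)) * (Real.exp u * f u) := by
      intro u _
      rw [show u - 2*t = -(2*t) + u by ring, Real.exp_add]
      ring
    rw [intervalIntegral.integral_congr hcongr,
      intervalIntegral.integral_sub (hII _ hcen 0 t)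
        (hII (fun u => Real.exp (-(2*t)) * (Real.exp u * f u)) (continuous_const.mul hce) 0 t),
      intervalIntegral.integral_const_mul, ← hJn, ← hI]
  ----------------------------------------------------------------
  rw [hT1, hT2, hgoalint]
  have hEneg : Real.exp (-t) = (Real.exp t)⁻¹ := Real.exp_neg t
  have hE2 : Real.exp (2*t) = Real.exp t * Real.exp t := (hexp2 t).symm
  have hEneg2 : Real.exp (-(2*t)) = (Real.exp t * Real.exp t)⁻¹ := by
    rw [Real.exp_neg, hE2]
  rw [hEneg, hE2, hEneg2]
  have hEne : Real.exp t ≠ 0 := Real.exp_ne_zero t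
  field_simp
  ring

end helpers

/-- A fractional Brownian motion with Hurst parameter `H` on the probability space
`(Ω, P)`: a process with continuous sample paths such that every finite linear
combination of its values (at nonnegative times) is a centered Gaussian random
variable, and with covariance `E[B s · B t] = (t^{2H} + s^{2H} - |t-s|^{2H})/2`. -/
def IsFractionalBrownianMotion {Ω : Type*} [MeasurableSpace Ω] (P : Measure Ω)
    (H : ℝ) (B : ℝ → Ω → ℝ) : Prop :=
  (∀ t : ℝ, 0 ≤ t → Measurable (B t)) ∧
  (∀ ω : Ω, Continuous fun t => B t ω) ∧
  (∀ (n : ℕ) (t : Fin n → ℝ), (∀ i, 0 ≤ t i) → ∀ c : Fin n → ℝ,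
    ∃ v : NNReal,
      Measure.map (fun ω => ∑ i, c i * B (t i) ω) P = gaussianReal 0 v) ∧
  (∀ s t : ℝ, 0 ≤ s → 0 ≤ t →
    ∫ ω, B s ω * B t ω ∂P = (1 / 2) * (t ^ (2 * H) + s ^ (2 * H) - |t - s| ^ (2 * H)))

theorem fOU_second_moment_formula {Ω : Type*} [MeasurableSpace Ω]
    (P : Measure Ω) [IsProbabilityMeasure P]
    (H ε : ℝ) (hH : H ∈ Set.Ioc (0 : ℝ) 1) (hε : 0 < ε)
    (B : ℝ → Ω → ℝ) (hB : IsFractionalBrownianMotion P H B)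
    (X : ℝ → Ω → ℝ)
    (hX : ∀ t ω, X t ω
      = ε * (B t ω - Real.exp (-t) * ∫ u in (0:ℝ)..t, Real.exp u * B u ω))
    (t : ℝ) (ht : 0 ≤ t) :
    ∫ ω, (X t ω) ^ 2 ∂P
      = ε ^ 2 * (t ^ (2 * H) * Real.exp (-t)
          + (1 / 2) * ∫ u in (0:ℝ)..t, u ^ (2 * H) * (Real.exp (-u) - Real.exp (u - 2 * t))) := by
  
  obtain ⟨hBmeas, hBcont, hBgauss, hBcov⟩ := hB
  have h2H : (0:ℝ) < 2 * H := by linarith [hH.1]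
  set f : ℝ → ℝ := fun u => u ^ (2*H) with hfdef
  have hf : Continuous f := by
    rw [continuous_iff_continuousAt]
    exact fun x => Real.continuousAt_rpow_const x (2*H) (Or.inr (le_of_lt h2H))
  -- the time-truncated process, measurable in both variables
  set Q : ℝ → Ω → ℝ := fun u ω => B (max u 0) ω with hQdef
  have hQt : ∀ s : ℝ, 0 ≤ s → Q s = B s := by
    intro s hs; funext ω; simp only [hQdef, max_eq_left hs]
  have hQmeas : ∀ u, Measurable (Q u) := fun u => hBmeas _ (le_max_right _ _)
  have hQcont : ∀ ω, Continuous fun u => Q u ω := fun ω =>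
    (hBcont ω).comp (continuous_id.max continuous_const)
  have hjoint : Measurable (Function.uncurry Q) :=
    measurable_uncurry_of_continuous_of_measurable hQcont hQmeas
  -- each Q u is in L²
  have hQL2 : ∀ u, MemLp (Q u) 2 P := by
    intro u
    obtain ⟨v, hv⟩ := hBgauss 1 (fun _ => max u 0) (fun _ => le_max_right _ _) (fun _ => 1)
    have heq : (fun ω => ∑ i : Fin 1, (1:ℝ) * B (max u 0) ω) = Q u := by
      funext ω; simp [hQdef]
    rw [heq] at hv
    exact memLp_two_of_map_gaussian (hQmeas u) hv
  -- covariance of Q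
  have hQcov : ∀ u v : ℝ, 0 ≤ u → 0 ≤ v →
      ∫ ω, Q u ω * Q v ω ∂P = (1/2) * (f v + f u - f |v - u|) := by
    intro u v hu hv
    rw [hQt u hu, hQt v hv]
    exact hBcov u v hu hv
  have hQsq : ∀ u : ℝ, 0 ≤ u → ∫ ω, Q u ω * Q u ω ∂P = f u := by
    intro u hu
    rw [hQcov u u hu hu]
    simp only [sub_self, abs_zero, hfdef]
    rw [Real.zero_rpow (ne_of_gt h2H)]
    ring
  -- the restricted measure on (0, t]
  set μt : Measure ℝ := volume.restrict (Set.Ioc 0 t) with hμt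
  haveI : IsFiniteMeasure μt := ⟨by
    rw [hμt, Measure.restrict_apply_univ]; exact measure_Ioc_lt_top⟩
  -- norm bound for products
  have hrpow_le : ∀ u : ℝ, 0 ≤ u → u ≤ t → f u ≤ f t := fun u hu hut =>
    Real.rpow_le_rpow hu hut (le_of_lt h2H)
  have hnormbound : ∀ u v : ℝ, 0 ≤ u → u ≤ t → 0 ≤ v → v ≤ t →
      (∫ ω, ‖Q u ω * Q v ω‖ ∂P) ≤ 2 * f t := by
    intro u v hu hut hv hvt
    have h1 : (∫ ω, ‖Q u ω * Q v ω‖ ∂P) ≤ ∫ ω, Q u ω ^ 2 + Q v ω ^ 2 ∂P := by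
      apply integral_mono_of_nonneg (ae_of_all _ fun ω => norm_nonneg _)
        ((hQL2 u).integrable_sq.add ((hQL2 v)).integrable_sq)
      refine ae_of_all _ fun ω => ?_
      simp only [norm_mul, Real.norm_eq_abs, Pi.add_apply]
      nlinarith [abs_nonneg (Q u ω), abs_nonneg (Q v ω), sq_abs (Q u ω), sq_abs (Q v ω),
        sq_nonneg (|Q u ω| - |Q v ω|)]
    have h2 : ∫ ω, Q u ω ^ 2 + Q v ω ^ 2 ∂P = f u + f v := by
      rw [integral_add (hQL2 u).integrable_sq ((hQL2 v)).integrable_sq]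
      simp only [sq]
      rw [hQsq u hu, hQsq v hv]
    have hb1 := hrpow_le u hu hut
    have hb2 := hrpow_le v hv hvt
    calc (∫ ω, ‖Q u ω * Q v ω‖ ∂P) ≤ ∫ ω, Q u ω ^ 2 + Q v ω ^ 2 ∂P := h1
    _ = f u + f v := h2
    _ ≤ 2 * f t := by linarith
  -- measurability of the parametrized products
  have hmeas1 : Measurable (fun p : ℝ × Ω => Real.exp p.1 * (Q p.1 p.2 * Q t p.2)) := by
    apply ((Real.measurable_exp.comp measurable_fst)).mul
    exact hjoint.mul ((hQmeas t).comp measurable_snd)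
  have hmeas2 : Measurable (fun q : (ℝ × ℝ) × Ω =>
      (Real.exp q.1.1 * Q q.1.1 q.2) * (Real.exp q.1.2 * Q q.1.2 q.2)) := by
    have m1 : Measurable fun q : (ℝ × ℝ) × Ω => Q q.1.1 q.2 :=
      hjoint.comp ((measurable_fst.comp measurable_fst).prodMk measurable_snd)
    have m2 : Measurable fun q : (ℝ × ℝ) × Ω => Q q.1.2 q.2 :=
      hjoint.comp ((measurable_snd.comp measurable_fst).prodMk measurable_snd)
    exact ((Real.measurable_exp.comp (measurable_fst.comp measurable_fst)).mul m1).mul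
      ((Real.measurable_exp.comp (measurable_snd.comp measurable_fst)).mul m2)
  -- integrability on the product spaces
  have hint1 : Integrable (fun p : ℝ × Ω => Real.exp p.1 * (Q p.1 p.2 * Q t p.2)) (μt.prod P) := by
    rw [integrable_prod_iff hmeas1.aestronglyMeasurable]
    constructor
    · refine ae_of_all _ fun u => ?_
      have h := ((memLp_two_integrable_mul (hQL2 u) (hQL2 t))).const_mul (Real.exp u)
      exact h.congr (ae_of_all _ fun ω => by first | rfl | (dsimp only; ring))
    · have hsm : StronglyMeasurable fun u : ℝ =>
          ∫ ω, ‖Real.exp u * (Q u ω * Q t ω)‖ ∂P :=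
        hmeas1.norm.stronglyMeasurable.integral_prod_right'
      apply Integrable.mono' (integrable_const (Real.exp t * (2 * f t)))
        hsm.aestronglyMeasurable
      rw [hμt]
      refine (ae_restrict_iff' measurableSet_Ioc).2 (ae_of_all _ fun u hu => ?_)
      rw [Real.norm_eq_abs, abs_of_nonneg (integral_nonneg fun ω => norm_nonneg _)]
      have heq : ∫ ω, ‖Real.exp u * (Q u ω * Q t ω)‖ ∂P
          = Real.exp u * ∫ ω, ‖Q u ω * Q t ω‖ ∂P := by
        rw [← integral_const_mul]
        apply integral_congr_ae (ae_of_all _ fun ω => ?_)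
        rw [norm_mul, Real.norm_eq_abs, abs_of_nonneg (Real.exp_nonneg u)]
      rw [heq]
      apply mul_le_mul (Real.exp_le_exp.2 hu.2)
        (hnormbound u t hu.1.le hu.2 ht le_rfl)
        (integral_nonneg fun ω => norm_nonneg _) (Real.exp_nonneg t)
  have hint2 : Integrable (fun q : (ℝ × ℝ) × Ω =>
      (Real.exp q.1.1 * Q q.1.1 q.2) * (Real.exp q.1.2 * Q q.1.2 q.2))
      ((μt.prod μt).prod P) := by
    rw [integrable_prod_iff hmeas2.aestronglyMeasurable]
    constructor
    · refine ae_of_all _ fun p => ?_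
      have := ((memLp_two_integrable_mul (hQL2 p.1) (hQL2 p.2))).const_mul
        (Real.exp p.1 * Real.exp p.2)
      exact this.congr (ae_of_all _ fun ω => by first | rfl | (dsimp only; ring))
    · have hsm : StronglyMeasurable fun p : ℝ × ℝ =>
          ∫ ω, ‖(Real.exp p.1 * Q p.1 ω) * (Real.exp p.2 * Q p.2 ω)‖ ∂P :=
        hmeas2.norm.stronglyMeasurable.integral_prod_right'
      apply Integrable.mono' (integrable_const (Real.exp t * Real.exp t * (2 * f t)))
        hsm.aestronglyMeasurable
      rw [hμt, Measure.prod_restrict]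
      refine (ae_restrict_iff' (measurableSet_Ioc.prod measurableSet_Ioc)).2
        (ae_of_all _ fun p hp => ?_)
      obtain ⟨hp1, hp2⟩ := hp
      rw [Real.norm_eq_abs, abs_of_nonneg (integral_nonneg fun ω => norm_nonneg _)]
      have heq : ∫ ω, ‖(Real.exp p.1 * Q p.1 ω) * (Real.exp p.2 * Q p.2 ω)‖ ∂P
          = (Real.exp p.1 * Real.exp p.2) * ∫ ω, ‖Q p.1 ω * Q p.2 ω‖ ∂P := by
        rw [← integral_const_mul]
        apply integral_congr_ae (ae_of_all _ fun ω => ?_)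
        rw [show (Real.exp p.1 * Q p.1 ω) * (Real.exp p.2 * Q p.2 ω)
            = (Real.exp p.1 * Real.exp p.2) * (Q p.1 ω * Q p.2 ω) by ring]
        rw [norm_mul, Real.norm_eq_abs,
          abs_of_nonneg (by positivity : (0:ℝ) ≤ Real.exp p.1 * Real.exp p.2)]
      rw [heq]
      apply mul_le_mul
        (mul_le_mul (Real.exp_le_exp.2 hp1.2) (Real.exp_le_exp.2 hp2.2)
          (Real.exp_nonneg _) (Real.exp_nonneg _))
        (hnormbound p.1 p.2 hp1.1.le hp1.2 hp2.1.le hp2.2)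
        (integral_nonneg fun ω => norm_nonneg _)
        (by positivity)
  -- the pathwise integral, as an integral against μt
  set S : Ω → ℝ := fun ω => ∫ u, Real.exp u * Q u ω ∂μt with hSdef
  have hSeq : ∀ ω, (∫ u in (0:ℝ)..t, Real.exp u * B u ω) = S ω := by
    intro ω
    rw [intervalIntegral.integral_of_le ht, hSdef, hμt]
    apply setIntegral_congr_fun measurableSet_Ioc
    intro u hu
    dsimp only
    rw [hQt u hu.1.le]
  -- pointwise product identities
  have hQtS_eq : ∀ ω, Q t ω * S ω = ∫ u, Real.exp u * (Q u ω * Q t ω) ∂μt := by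
    intro ω
    rw [hSdef]
    dsimp only
    rw [← integral_const_mul]
    exact integral_congr_ae (ae_of_all _ fun u => by ring)
  have hSS_eq : ∀ ω, S ω * S ω
      = ∫ q, (Real.exp q.1 * Q q.1 ω) * (Real.exp q.2 * Q q.2 ω) ∂(μt.prod μt) := by
    intro ω
    rw [hSdef]
    dsimp only
    exact (integral_prod_mul (fun u => Real.exp u * Q u ω) (fun v => Real.exp v * Q v ω)).symm
  -- integrability over Ω
  have iQtQt : Integrable (fun ω => Q t ω * Q t ω) P :=
    memLp_two_integrable_mul (hQL2 t) (hQL2 t)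
  have iQtS : Integrable (fun ω => Q t ω * S ω) P :=
    hint1.integral_prod_right.congr (ae_of_all _ fun ω => (hQtS_eq ω).symm)
  have iSS : Integrable (fun ω => S ω * S ω) P :=
    hint2.integral_prod_right.congr (ae_of_all _ fun ω => (hSS_eq ω).symm)
  -- the three expectations
  have hE0 : ∫ ω, Q t ω * Q t ω ∂P = f t := hQsq t ht
  have hE1 : ∫ ω, Q t ω * S ω ∂P
      = ∫ u in (0:ℝ)..t, Real.exp u * ((1/2) * (f t + f u - f (t - u))) := by
    calc ∫ ω, Q t ω * S ω ∂P
        = ∫ ω, ∫ u, Real.exp u * (Q u ω * Q t ω) ∂μt ∂P :=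
          integral_congr_ae (ae_of_all _ hQtS_eq)
      _ = ∫ u, ∫ ω, Real.exp u * (Q u ω * Q t ω) ∂P ∂μt :=
          (integral_integral_swap (f := fun u ω => Real.exp u * (Q u ω * Q t ω)) hint1).symm
      _ = ∫ u in (0:ℝ)..t, Real.exp u * ((1/2) * (f t + f u - f (t - u))) := by
          rw [intervalIntegral.integral_of_le ht, hμt]
          apply setIntegral_congr_fun measurableSet_Ioc
          intro u hu
          dsimp only
          rw [integral_const_mul, hQcov u t hu.1.le ht,
            abs_of_nonneg (sub_nonneg.2 hu.2)]
  have hE2 : ∫ ω, S ω * S ω ∂P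
      = ∫ u in (0:ℝ)..t, Real.exp u *
          ∫ v in (0:ℝ)..t, Real.exp v * ((1/2) * (f u + f v - f |u - v|)) := by
    calc ∫ ω, S ω * S ω ∂P
        = ∫ ω, ∫ q, (Real.exp q.1 * Q q.1 ω) * (Real.exp q.2 * Q q.2 ω) ∂(μt.prod μt) ∂P :=
          integral_congr_ae (ae_of_all _ hSS_eq)
      _ = ∫ q, ∫ ω, (Real.exp q.1 * Q q.1 ω) * (Real.exp q.2 * Q q.2 ω) ∂P ∂(μt.prod μt) :=
          (integral_integral_swap
            (f := fun (q : ℝ × ℝ) ω => (Real.exp q.1 * Q q.1 ω) * (Real.exp q.2 * Q q.2 ω))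
            hint2).symm
      _ = ∫ u, ∫ v, ∫ ω, (Real.exp u * Q u ω) * (Real.exp v * Q v ω) ∂P ∂μt ∂μt :=
          integral_prod _ hint2.integral_prod_left
      _ = ∫ u in (0:ℝ)..t, Real.exp u *
            ∫ v in (0:ℝ)..t, Real.exp v * ((1/2) * (f u + f v - f |u - v|)) := by
          rw [intervalIntegral.integral_of_le ht, hμt]
          apply setIntegral_congr_fun measurableSet_Ioc
          intro u hu
          dsimp only
          rw [intervalIntegral.integral_of_le ht]
          rw [← integral_const_mul]
          apply setIntegral_congr_fun measurableSet_Ioc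
          intro v hv
          dsimp only
          have h1 : ∫ ω, (Real.exp u * Q u ω) * (Real.exp v * Q v ω) ∂P
              = (Real.exp u * Real.exp v) * ∫ ω, Q u ω * Q v ω ∂P := by
            rw [← integral_const_mul]
            exact integral_congr_ae (ae_of_all _ fun ω => by ring)
          rw [h1, hQcov u v hu.1.le hv.1.le, abs_sub_comm]
          ring
  -- pointwise expansion of the square
  have hXpt : ∀ ω, X t ω ^ 2
      = ε^2 * ((Q t ω * Q t ω) - 2 * Real.exp (-t) * (Q t ω * S ω)
          + Real.exp (-(2*t)) * (S ω * S ω)) := by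
    intro ω
    rw [hX t ω, hSeq ω, ← hQt t ht]
    rw [show Real.exp (-(2*t)) = Real.exp (-t) * Real.exp (-t) by
      rw [← Real.exp_add]; ring_nf]
    ring
  have hmain := fOU_main_calc f hf t ht
  calc ∫ ω, X t ω ^ 2 ∂P
      = ∫ ω, ε^2 * ((Q t ω * Q t ω) - 2 * Real.exp (-t) * (Q t ω * S ω)
          + Real.exp (-(2*t)) * (S ω * S ω)) ∂P := integral_congr_ae (ae_of_all _ hXpt)
    _ = ε^2 * ((∫ ω, Q t ω * Q t ω ∂P) - 2 * Real.exp (-t) * (∫ ω, Q t ω * S ω ∂P)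
          + Real.exp (-(2*t)) * (∫ ω, S ω * S ω ∂P)) := by
        rw [integral_const_mul]
        congr 1
        have i3 : Integrable (fun ω => 2 * Real.exp (-t) * (Q t ω * S ω)) P :=
          iQtS.const_mul _
        have i1 : Integrable (fun ω => Q t ω * Q t ω
            - 2 * Real.exp (-t) * (Q t ω * S ω)) P := iQtQt.sub i3
        have i2 : Integrable (fun ω => Real.exp (-(2*t)) * (S ω * S ω)) P := iSS.const_mul _
        rw [integral_add i1 i2, integral_sub iQtQt i3, integral_const_mul, integral_const_mul]
    _ = ε ^ 2 * (t ^ (2 * H) * Real.exp (-t)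
          + (1 / 2) * ∫ u in (0:ℝ)..t, u ^ (2 * H) * (Real.exp (-u) - Real.exp (u - 2 * t))) := by
        rw [hE0, hE1, hE2]
        simp only [hfdef] at hmain ⊢
        linear_combination ε^2 * hmain
end

section
/- Let H > 0 and t ≥ 0. Then t^{2H} − 2 e^{−t} ∫_0^t (1/2)( t^{2H} + u^{2H} − (t−u)^{2H} ) e^{u} du + e^{−2t} ∫_0^t ∫_0^t (1/2)( u^{2H} + s^{2H} − |u−s|^{2H} ) e^{u+s} ds du = t^{2H} e^{−t} + (1/2) ∫_0^t u^{2H} ( e^{−u} − e^{u−2t} ) du. -/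
open MeasureTheory Real

lemma fOU_cont {a : ℝ} (ha : 0 ≤ a) : Continuous fun x : ℝ => x ^ a :=
  Real.continuous_rpow_const ha

lemma fOU_L1 (a t : ℝ) :
    (∫ u in (0:ℝ)..t, (t - u) ^ a * Real.exp u)
      = Real.exp t * ∫ u in (0:ℝ)..t, u ^ a * Real.exp (-u) := by
  calc (∫ u in (0:ℝ)..t, (t - u) ^ a * Real.exp u)
      = ∫ u in (0:ℝ)..t, (fun v => v ^ a * Real.exp (t - v)) (t - u) := by
        apply intervalIntegral.integral_congr
        intro u _
        simp [sub_sub_cancel]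
    _ = ∫ v in t - t..t - 0, v ^ a * Real.exp (t - v) :=
        intervalIntegral.integral_comp_sub_left (fun v => v ^ a * Real.exp (t - v)) t
    _ = Real.exp t * ∫ v in (0:ℝ)..t, v ^ a * Real.exp (-v) := by
        rw [sub_self, sub_zero, ← intervalIntegral.integral_const_mul]
        apply intervalIntegral.integral_congr
        intro v _
        dsimp only
        rw [Real.exp_sub, Real.exp_neg]
        ring

lemma fOU_L2 {a : ℝ} (ha : 0 ≤ a) (t u : ℝ) (hu0 : 0 ≤ u) (hut : u ≤ t) :
    (∫ s in (0:ℝ)..t, |u - s| ^ a * Real.exp s)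
      = Real.exp u * (∫ v in (0:ℝ)..u, v ^ a * Real.exp (-v))
        + Real.exp u * ∫ v in (0:ℝ)..(t - u), v ^ a * Real.exp v := by
  have hcont : Continuous fun s : ℝ => |u - s| ^ a * Real.exp s :=
    (((fOU_cont ha).comp (continuous_const.sub continuous_id).abs)).mul Real.continuous_exp
  rw [← intervalIntegral.integral_add_adjacent_intervals (b := u)
      (hcont.intervalIntegrable 0 u) (hcont.intervalIntegrable u t)]
  congr 1
  · calc (∫ s in (0:ℝ)..u, |u - s| ^ a * Real.exp s)
        = ∫ s in (0:ℝ)..u, (fun v => |v| ^ a * Real.exp (u - v)) (u - s) := by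
          apply intervalIntegral.integral_congr
          intro s _
          dsimp only
          simp [sub_sub_cancel]
      _ = ∫ v in u - u..u - 0, |v| ^ a * Real.exp (u - v) :=
          intervalIntegral.integral_comp_sub_left (fun v => |v| ^ a * Real.exp (u - v)) u
      _ = Real.exp u * ∫ v in (0:ℝ)..u, v ^ a * Real.exp (-v) := by
          rw [sub_self, sub_zero, ← intervalIntegral.integral_const_mul]
          apply intervalIntegral.integral_congr
          intro v hv
          dsimp only
          rw [Set.uIcc_of_le hu0] at hv
          rw [abs_of_nonneg hv.1, Real.exp_sub, Real.exp_neg]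
          ring
  · calc (∫ s in u..t, |u - s| ^ a * Real.exp s)
        = ∫ x in (u + 0)..(u + (t - u)), |u - x| ^ a * Real.exp x := by
          rw [add_zero, add_sub_cancel]
      _ = ∫ x in (0:ℝ)..(t - u), (fun s => |u - s| ^ a * Real.exp s) (u + x) :=
          (intervalIntegral.integral_comp_add_left (fun s => |u - s| ^ a * Real.exp s) u).symm
      _ = Real.exp u * ∫ v in (0:ℝ)..(t - u), v ^ a * Real.exp v := by
          rw [← intervalIntegral.integral_const_mul]
          apply intervalIntegral.integral_congr
          intro x hx
          dsimp only
          rw [Set.uIcc_of_le (by linarith : (0:ℝ) ≤ t - u)] at hx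
          rw [show u - (u + x) = -x by ring, abs_neg, abs_of_nonneg hx.1, Real.exp_add]
          ring

lemma fOU_exp2_deriv (x : ℝ) :
    HasDerivAt (fun y : ℝ => Real.exp (2 * y) / 2) (Real.exp (2 * x)) x := by
  have h2 : HasDerivAt (fun y : ℝ => 2 * y) 2 x := by
    simpa using (hasDerivAt_id x).const_mul 2
  have := h2.exp.div_const 2
  have e : Real.exp (2 * x) * 2 / 2 = Real.exp (2 * x) := by ring
  rw [e] at this; exact this

lemma fOU_L3 {a : ℝ} (ha : 0 ≤ a) (t : ℝ) :
    (∫ u in (0:ℝ)..t, (∫ v in (0:ℝ)..u, v ^ a * Real.exp (-v)) * Real.exp (2 * u))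
      = (∫ v in (0:ℝ)..t, v ^ a * Real.exp (-v)) * Real.exp (2 * t) / 2
        - (1 / 2) * ∫ u in (0:ℝ)..t, u ^ a * Real.exp u := by
  have hcont : Continuous fun v : ℝ => v ^ a * Real.exp (-v) :=
    (fOU_cont ha).mul (Real.continuous_exp.comp continuous_neg)
  have key := intervalIntegral.integral_mul_deriv_eq_deriv_mul
    (u := fun x => ∫ v in (0:ℝ)..x, v ^ a * Real.exp (-v))
    (v := fun y : ℝ => Real.exp (2 * y) / 2)
    (u' := fun x => x ^ a * Real.exp (-x))
    (v' := fun x => Real.exp (2 * x))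
    (a := 0) (b := t)
    (fun x _ => (hcont.integral_hasStrictDerivAt 0 x).hasDerivAt)
    (fun x _ => fOU_exp2_deriv x)
    (hcont.intervalIntegrable 0 t)
    ((Real.continuous_exp.comp (continuous_const.mul continuous_id)).intervalIntegrable 0 t)
  rw [key]
  rw [intervalIntegral.integral_same]
  have : (∫ x in (0:ℝ)..t, (x ^ a * Real.exp (-x)) * (Real.exp (2 * x) / 2))
      = (1 / 2) * ∫ u in (0:ℝ)..t, u ^ a * Real.exp u := by
    rw [← intervalIntegral.integral_const_mul]
    apply intervalIntegral.integral_congr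
    intro x _
    dsimp only
    have hx : Real.exp (-x) * Real.exp (2 * x) = Real.exp x := by
      rw [← Real.exp_add]; congr 1; ring
    calc x ^ a * Real.exp (-x) * (Real.exp (2 * x) / 2)
        = x ^ a * (Real.exp (-x) * Real.exp (2 * x)) / 2 := by ring
      _ = 1 / 2 * (x ^ a * Real.exp x) := by rw [hx]; ring
  rw [this]
  ring

lemma fOU_L4 {a : ℝ} (ha : 0 ≤ a) (t : ℝ) :
    (∫ u in (0:ℝ)..t, (∫ v in (0:ℝ)..(t - u), v ^ a * Real.exp v) * Real.exp (2 * u))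
      = (1 / 2) * Real.exp (2 * t) * (∫ v in (0:ℝ)..t, v ^ a * Real.exp (-v))
        - (1 / 2) * ∫ v in (0:ℝ)..t, v ^ a * Real.exp v := by
  have hcont : Continuous fun v : ℝ => v ^ a * Real.exp v :=
    (fOU_cont ha).mul Real.continuous_exp
  have hK : ∀ x : ℝ, HasDerivAt (fun y => ∫ v in (0:ℝ)..(t - y), v ^ a * Real.exp v)
      ((t - x) ^ a * Real.exp (t - x) * (-1)) x := by
    intro x
    exact ((hcont.integral_hasStrictDerivAt 0 (t - x)).hasDerivAt).comp x
      ((hasDerivAt_id x).const_sub t)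
  have key := intervalIntegral.integral_mul_deriv_eq_deriv_mul
    (u := fun y => ∫ v in (0:ℝ)..(t - y), v ^ a * Real.exp v)
    (v := fun y : ℝ => Real.exp (2 * y) / 2)
    (u' := fun x => (t - x) ^ a * Real.exp (t - x) * (-1))
    (v' := fun x => Real.exp (2 * x))
    (a := 0) (b := t)
    (fun x _ => hK x)
    (fun x _ => fOU_exp2_deriv x)
    (((((fOU_cont ha).comp (continuous_const.sub continuous_id)).mul
        (Real.continuous_exp.comp (continuous_const.sub continuous_id))).mul
        continuous_const).intervalIntegrable 0 t)
    ((Real.continuous_exp.comp (continuous_const.mul continuous_id)).intervalIntegrable 0 t)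
  rw [key]
  rw [sub_self, intervalIntegral.integral_same, sub_zero]
  have h2 : (∫ x in (0:ℝ)..t, ((t - x) ^ a * Real.exp (t - x) * (-1)) * (Real.exp (2 * x) / 2))
      = -(1 / 2) * (Real.exp t * ∫ x in (0:ℝ)..t, (t - x) ^ a * Real.exp x) := by
    rw [← intervalIntegral.integral_const_mul, ← intervalIntegral.integral_const_mul]
    apply intervalIntegral.integral_congr
    intro x _
    dsimp only
    have hx : Real.exp (t - x) * Real.exp (2 * x) = Real.exp t * Real.exp x := by
      rw [← Real.exp_add, ← Real.exp_add]; congr 1; ring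
    calc (t - x) ^ a * Real.exp (t - x) * (-1) * (Real.exp (2 * x) / 2)
        = -(1 / 2) * ((t - x) ^ a * (Real.exp (t - x) * Real.exp (2 * x))) := by ring
      _ = -(1 / 2) * (Real.exp t * ((t - x) ^ a * Real.exp x)) := by rw [hx]; ring
  rw [h2, fOU_L1]
  have hee : Real.exp t * Real.exp t = Real.exp (2 * t) := by
    rw [← Real.exp_add]; congr 1; ring
  simp only [mul_zero, Real.exp_zero]
  rw [← hee]; ring

lemma fOU_L5 {a : ℝ} (ha : 0 ≤ a) (t u : ℝ) (hu0 : 0 ≤ u) (hut : u ≤ t) :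
    (∫ s in (0:ℝ)..t, (1 / 2) * (u ^ a + s ^ a - |u - s| ^ a) * Real.exp (u + s))
      = (1 / 2) * (u ^ a * Real.exp u) * (Real.exp t - 1)
        + ((1 / 2) * ∫ s in (0:ℝ)..t, s ^ a * Real.exp s) * Real.exp u
        - (1 / 2) * ((∫ v in (0:ℝ)..u, v ^ a * Real.exp (-v)) * Real.exp (2 * u))
        - (1 / 2) * ((∫ v in (0:ℝ)..(t - u), v ^ a * Real.exp v) * Real.exp (2 * u)) := by
  have hca : Continuous fun s : ℝ => |u - s| ^ a * Real.exp s :=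
    ((fOU_cont ha).comp (continuous_const.sub continuous_id).abs).mul Real.continuous_exp
  have hcs : Continuous fun s : ℝ => s ^ a * Real.exp s := (fOU_cont ha).mul Real.continuous_exp
  have e1 : (∫ s in (0:ℝ)..t, (1 / 2) * (u ^ a + s ^ a - |u - s| ^ a) * Real.exp (u + s))
      = ∫ s in (0:ℝ)..t,
          ((1 / 2 * Real.exp u * u ^ a) * Real.exp s + (1 / 2 * Real.exp u) * (s ^ a * Real.exp s)
            - (1 / 2 * Real.exp u) * (|u - s| ^ a * Real.exp s)) := by
    apply intervalIntegral.integral_congr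
    intro s _
    dsimp only
    rw [Real.exp_add]
    ring
  rw [e1, intervalIntegral.integral_sub
      (((Real.continuous_exp.const_mul _).intervalIntegrable 0 t).add
        ((hcs.const_mul _).intervalIntegrable 0 t))
      ((hca.const_mul _).intervalIntegrable 0 t),
    intervalIntegral.integral_add
      (((Real.continuous_exp.const_mul _)).intervalIntegrable 0 t)
      ((hcs.const_mul _).intervalIntegrable 0 t),
    intervalIntegral.integral_const_mul, intervalIntegral.integral_const_mul,
    intervalIntegral.integral_const_mul, integral_exp,
    fOU_L2 ha t u hu0 hut]
  have hee : Real.exp u * Real.exp u = Real.exp (2 * u) := by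
    rw [← Real.exp_add]; congr 1; ring
  rw [Real.exp_zero, ← hee]
  ring

theorem fOU_variance_identity (H t : ℝ) (hH : 0 < H) (ht : 0 ≤ t) :
    t ^ (2 * H)
      - 2 * Real.exp (-t) * (∫ u in (0:ℝ)..t,
          (1 / 2) * (t ^ (2 * H) + u ^ (2 * H) - (t - u) ^ (2 * H)) * Real.exp u)
      + Real.exp (-(2 * t)) * (∫ u in (0:ℝ)..t, ∫ s in (0:ℝ)..t,
          (1 / 2) * (u ^ (2 * H) + s ^ (2 * H) - |u - s| ^ (2 * H)) * Real.exp (u + s))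
      = t ^ (2 * H) * Real.exp (-t)
        + (1 / 2) * ∫ u in (0:ℝ)..t, u ^ (2 * H) * (Real.exp (-u) - Real.exp (u - 2 * t)) := by
  have ha : (0:ℝ) ≤ 2 * H := by linarith
  have hcs : Continuous fun s : ℝ => s ^ (2 * H) * Real.exp s :=
    (fOU_cont ha).mul Real.continuous_exp
  have hcn : Continuous fun s : ℝ => s ^ (2 * H) * Real.exp (-s) :=
    (fOU_cont ha).mul (Real.continuous_exp.comp continuous_neg)
  have hct : Continuous fun u : ℝ => (t - u) ^ (2 * H) * Real.exp u :=
    ((fOU_cont ha).comp (continuous_const.sub continuous_id)).mul Real.continuous_exp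
  have hexp2 : Continuous fun x : ℝ => Real.exp (2 * x) :=
    Real.continuous_exp.comp (continuous_const.mul continuous_id)
  -- single integral
  have h1 : (∫ u in (0:ℝ)..t, (1 / 2) * (t ^ (2 * H) + u ^ (2 * H) - (t - u) ^ (2 * H)) * Real.exp u)
      = (1 / 2) * (t ^ (2 * H) * (Real.exp t - 1)
          + (∫ v in (0:ℝ)..t, v ^ (2 * H) * Real.exp v)
          - Real.exp t * ∫ v in (0:ℝ)..t, v ^ (2 * H) * Real.exp (-v)) := by
    have e1 : (∫ u in (0:ℝ)..t, (1 / 2) * (t ^ (2 * H) + u ^ (2 * H) - (t - u) ^ (2 * H)) * Real.exp u)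
        = ∫ u in (0:ℝ)..t, ((1 / 2 * t ^ (2 * H)) * Real.exp u
            + (1 / 2) * (u ^ (2 * H) * Real.exp u)
            - (1 / 2) * ((t - u) ^ (2 * H) * Real.exp u)) := by
      apply intervalIntegral.integral_congr
      intro u _
      dsimp only
      ring
    rw [e1, intervalIntegral.integral_sub
        (((Real.continuous_exp.const_mul _).intervalIntegrable 0 t).add
          ((hcs.const_mul _).intervalIntegrable 0 t))
        ((hct.const_mul _).intervalIntegrable 0 t),
      intervalIntegral.integral_add
        ((Real.continuous_exp.const_mul _).intervalIntegrable 0 t)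
        ((hcs.const_mul _).intervalIntegrable 0 t),
      intervalIntegral.integral_const_mul, intervalIntegral.integral_const_mul,
      intervalIntegral.integral_const_mul, integral_exp, fOU_L1, Real.exp_zero]
    ring
  -- continuity of primitives
  have hG : Continuous fun x : ℝ => ∫ v in (0:ℝ)..x, v ^ (2 * H) * Real.exp (-v) :=
    continuous_iff_continuousAt.2 fun x =>
      ((hcn.integral_hasStrictDerivAt 0 x).hasDerivAt).continuousAt
  have hKc : Continuous fun x : ℝ => ∫ v in (0:ℝ)..(t - x), v ^ (2 * H) * Real.exp v :=
    (continuous_iff_continuousAt.2 fun x =>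
      ((hcs.integral_hasStrictDerivAt 0 x).hasDerivAt).continuousAt).comp
      (continuous_const.sub continuous_id)
  -- double integral
  have hD : (∫ u in (0:ℝ)..t, ∫ s in (0:ℝ)..t,
        (1 / 2) * (u ^ (2 * H) + s ^ (2 * H) - |u - s| ^ (2 * H)) * Real.exp (u + s))
      = (1 / 2) * (Real.exp t - 1) * (∫ v in (0:ℝ)..t, v ^ (2 * H) * Real.exp v)
        + ((1 / 2) * ∫ v in (0:ℝ)..t, v ^ (2 * H) * Real.exp v) * (Real.exp t - 1)
        - (1 / 2) * ((∫ v in (0:ℝ)..t, v ^ (2 * H) * Real.exp (-v)) * Real.exp (2 * t) / 2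
            - (1 / 2) * ∫ v in (0:ℝ)..t, v ^ (2 * H) * Real.exp v)
        - (1 / 2) * ((1 / 2) * Real.exp (2 * t) * (∫ v in (0:ℝ)..t, v ^ (2 * H) * Real.exp (-v))
            - (1 / 2) * ∫ v in (0:ℝ)..t, v ^ (2 * H) * Real.exp v) := by
    have e2 : (∫ u in (0:ℝ)..t, ∫ s in (0:ℝ)..t,
          (1 / 2) * (u ^ (2 * H) + s ^ (2 * H) - |u - s| ^ (2 * H)) * Real.exp (u + s))
        = ∫ u in (0:ℝ)..t,
            (((1 / 2) * (Real.exp t - 1)) * (u ^ (2 * H) * Real.exp u)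
              + ((1 / 2) * ∫ v in (0:ℝ)..t, v ^ (2 * H) * Real.exp v) * Real.exp u
              - (1 / 2) * ((∫ v in (0:ℝ)..u, v ^ (2 * H) * Real.exp (-v)) * Real.exp (2 * u))
              - (1 / 2) * ((∫ v in (0:ℝ)..(t - u), v ^ (2 * H) * Real.exp v) * Real.exp (2 * u))) := by
      apply intervalIntegral.integral_congr
      intro u hu
      rw [Set.uIcc_of_le ht] at hu
      dsimp only
      rw [fOU_L5 ha t u hu.1 hu.2]
      ring
    have i1 : IntervalIntegrable
        (fun u : ℝ => ((1 / 2) * (Real.exp t - 1)) * (u ^ (2 * H) * Real.exp u)) volume 0 t :=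
      (continuous_const.mul hcs).intervalIntegrable 0 t
    have i2 : IntervalIntegrable
        (fun u : ℝ => ((1 / 2) * ∫ v in (0:ℝ)..t, v ^ (2 * H) * Real.exp v) * Real.exp u) volume 0 t :=
      (continuous_const.mul Real.continuous_exp).intervalIntegrable 0 t
    have i3 : IntervalIntegrable
        (fun u : ℝ => (1 / 2) * ((∫ v in (0:ℝ)..u, v ^ (2 * H) * Real.exp (-v)) * Real.exp (2 * u))) volume 0 t :=
      (continuous_const.mul (hG.mul hexp2)).intervalIntegrable 0 t
    have i4 : IntervalIntegrable
        (fun u : ℝ => (1 / 2) * ((∫ v in (0:ℝ)..(t - u), v ^ (2 * H) * Real.exp v) * Real.exp (2 * u))) volume 0 t :=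
      (continuous_const.mul (hKc.mul hexp2)).intervalIntegrable 0 t
    rw [e2, intervalIntegral.integral_sub ((i1.add i2).sub i3) i4,
      intervalIntegral.integral_sub (i1.add i2) i3,
      intervalIntegral.integral_add i1 i2,
      intervalIntegral.integral_const_mul, intervalIntegral.integral_const_mul,
      intervalIntegral.integral_const_mul, intervalIntegral.integral_const_mul,
      integral_exp, fOU_L3 ha t, fOU_L4 ha t, Real.exp_zero]
  -- RHS integral
  have hR : (∫ u in (0:ℝ)..t, u ^ (2 * H) * (Real.exp (-u) - Real.exp (u - 2 * t)))
      = (∫ v in (0:ℝ)..t, v ^ (2 * H) * Real.exp (-v))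
        - (Real.exp (2 * t))⁻¹ * ∫ v in (0:ℝ)..t, v ^ (2 * H) * Real.exp v := by
    have e3 : (∫ u in (0:ℝ)..t, u ^ (2 * H) * (Real.exp (-u) - Real.exp (u - 2 * t)))
        = ∫ u in (0:ℝ)..t, (u ^ (2 * H) * Real.exp (-u)
            - (Real.exp (2 * t))⁻¹ * (u ^ (2 * H) * Real.exp u)) := by
      apply intervalIntegral.integral_congr
      intro u _
      dsimp only
      rw [Real.exp_sub]
      ring
    rw [e3, intervalIntegral.integral_sub (hcn.intervalIntegrable 0 t)
        ((hcs.const_mul _).intervalIntegrable 0 t),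
      intervalIntegral.integral_const_mul]
  rw [h1, hD, hR]
  have hee : Real.exp (2 * t) = Real.exp t * Real.exp t := by
    rw [← Real.exp_add]; congr 1; ring
  rw [Real.exp_neg t, Real.exp_neg (2 * t), hee]
  have hne : Real.exp t ≠ 0 := Real.exp_ne_zero t
  field_simp
  ring
end
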